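/- Let 𝒢 be a graph covering with inverse limit system (X, f). Then (X, f) is chain transitive if and only if Gₙ is irreducible for every n ≥ 1. -/

import Mathlib

/-- A graph covering `G₀ ←φ₁ G₁ ←φ₂ G₂ ← ⋯` : a sequence of finite directed graphs
with surjective edge relations, `G₀` the singleton graph, and +directional
edge-surjective bonding graph homomorphisms. -/
structure GraphCovering where
  /-- vertex sets -/
  V : ℕ → Type
  fin : ∀ n, Fintype (V n)
  /-- edge relations -/
  E : ∀ n, V n → V n → Prop
  /-- `G₀` is a singleton graph -/
  singleV : ∀ a b : V 0, a = b
  /-- the edge relation is surjective: every vertex has an outgoing edge -/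
  surjOut : ∀ n (v : V n), ∃ u, E n v u
  /-- every vertex has an incoming edge -/
  surjIn : ∀ n (v : V n), ∃ u, E n u v
  /-- the bonding maps -/
  φ : ∀ n, V (n + 1) → V n
  /-- the bonding maps are graph homomorphisms -/
  hom : ∀ n u v, E (n + 1) u v → E n (φ n u) (φ n v)
  /-- the bonding maps are +directional -/
  plusdir : ∀ n u v v', E (n + 1) u v → E (n + 1) u v' → φ n v = φ n v'
  /-- the bonding maps are edge-surjective -/
  edgeSurj : ∀ n u v, E n u v → ∃ u' v', E (n + 1) u' v' ∧ φ n u' = u ∧ φ n v' = v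

/-- The inverse limit `V_𝒢` of a graph covering. -/
def GraphCovering.limit (G : GraphCovering) : Type :=
  { x : ∀ n, G.V n // ∀ n, G.φ n (x (n + 1)) = x n }

/-- The relation `E_𝒢` on the inverse limit. -/
def GraphCovering.rel (G : GraphCovering) (x y : G.limit) : Prop :=
  ∀ n, G.E n (x.1 n) (y.1 n)

instance (G : GraphCovering) (n : ℕ) : TopologicalSpace (G.V n) := ⊥
instance (G : GraphCovering) (n : ℕ) : DiscreteTopology (G.V n) := ⟨rfl⟩

instance (G : GraphCovering) : TopologicalSpace G.limit :=
  inferInstanceAs (TopologicalSpace { x : ∀ n, G.V n // ∀ n, G.φ n (x (n + 1)) = x n })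

/-- A directed graph is irreducible if any vertex can be reached from any other
by a walk. -/
def GraphIrreducible {V : Type*} (E : V → V → Prop) : Prop :=
  ∀ u v : V, ∃ w : List V, w ≠ [] ∧ w.Chain' E ∧ w.head? = some u ∧ w.getLast? = some v

/-! ### Auxiliary lemmas -/

lemma GraphCovering.phi_surj (G : GraphCovering) (n : ℕ) (v : G.V n) :
    ∃ u : G.V (n+1), G.φ n u = v := by
  obtain ⟨w, hw⟩ := G.surjIn n v
  obtain ⟨u', v', _, _, h2⟩ := G.edgeSurj n w v hw
  exact ⟨v', h2⟩

/-- extend a vertex at level 0 upwards by choosing preimages -/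
noncomputable def GraphCovering.base (G : GraphCovering) (v : G.V 0) : (j : ℕ) → G.V j
  | 0 => v
  | (j+1) => (G.phi_surj j (G.base v j)).choose

lemma GraphCovering.base_spec (G : GraphCovering) (v : G.V 0) (j : ℕ) :
    G.φ j (G.base v (j+1)) = G.base v j :=
  (G.phi_surj j (G.base v j)).choose_spec

/-- replace coordinates of `x` from level `n+1` up, making coordinate `n+1` equal `v` -/
noncomputable def GraphCovering.splice (G : GraphCovering) (n : ℕ) (v : G.V (n+1))
    (x : G.limit) : (j : ℕ) → G.V j
  | 0 => x.1 0
  | (j+1) =>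
    if h : j + 1 ≤ n then x.1 (j+1)
    else if h2 : j + 1 = n + 1 then _root_.cast (congrArg G.V h2.symm) v
    else (G.phi_surj j (G.splice n v x j)).choose

lemma GraphCovering.splice_low (G : GraphCovering) (n : ℕ) (v : G.V (n+1)) (x : G.limit)
    (j : ℕ) (hj : j ≤ n) : G.splice n v x j = x.1 j := by
  cases j with
  | zero => rfl
  | succ j => rw [splice, dif_pos hj]

lemma GraphCovering.splice_eq (G : GraphCovering) (n : ℕ) (v : G.V (n+1)) (x : G.limit) :
    G.splice n v x (n+1) = v := by
  rw [splice, dif_neg (by omega), dif_pos rfl]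
  rfl

lemma GraphCovering.splice_spec (G : GraphCovering) (n : ℕ) (v : G.V (n+1)) (x : G.limit)
    (hx : x.1 n = G.φ n v) (j : ℕ) :
    G.φ j (G.splice n v x (j+1)) = G.splice n v x j := by
  rcases lt_trichotomy (j+1) (n+1) with h | h | h
  · rw [G.splice_low n v x (j+1) (by omega), G.splice_low n v x j (by omega)]
    exact x.2 j
  · have hj : j = n := by omega
    subst hj
    rw [G.splice_eq, G.splice_low _ v x j (le_refl j), hx]
  · rw [show G.splice n v x (j+1) = (G.phi_surj j (G.splice n v x j)).choose by
      rw [splice, dif_neg (by omega), dif_neg (by omega)]]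
    exact (G.phi_surj j (G.splice n v x j)).choose_spec

/-- every vertex lifts to a point of the inverse limit -/
lemma GraphCovering.exists_lift (G : GraphCovering) (n : ℕ) (v : G.V n) :
    ∃ x : G.limit, x.1 n = v := by
  induction n with
  | zero => exact ⟨⟨G.base v, G.base_spec v⟩, rfl⟩
  | succ n ih =>
    obtain ⟨x, hx⟩ := ih (G.φ n v)
    exact ⟨⟨G.splice n v x, G.splice_spec n v x hx⟩, G.splice_eq n v x⟩

/-- points agreeing at level `j` agree at all lower levels -/
lemma GraphCovering.agree_down (G : GraphCovering) (a b : G.limit) :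
    ∀ j, a.1 j = b.1 j → ∀ k ≤ j, a.1 k = b.1 k := by
  intro j
  induction j with
  | zero =>
    intro h k hk
    have hk0 : k = 0 := by omega
    subst hk0; exact h
  | succ j ih =>
    intro h k hk
    have hj : a.1 j = b.1 j := by rw [← a.2 j, ← b.2 j, h]
    rcases Nat.lt_or_ge k (j+1) with hk' | hk'
    · exact ih hj k (by omega)
    · have : k = j + 1 := by omega
      subst this; exact h

/-- the inverse limit is compact in the product topology -/
lemma GraphCovering.compactSpace_limit (G : GraphCovering) : CompactSpace G.limit := by
  haveI : ∀ n, Finite (G.V n) := fun n => @Finite.of_fintype _ (G.fin n)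
  have hcl : IsClosed {x : ∀ n, G.V n | ∀ n, G.φ n (x (n+1)) = x n} := by
    have he : {x : ∀ n, G.V n | ∀ n, G.φ n (x (n+1)) = x n}
        = ⋂ n, {x : ∀ n, G.V n | G.φ n (x (n+1)) = x n} := by
      ext; simp [Set.mem_iInter]
    rw [he]
    refine isClosed_iInter fun n => isClosed_eq ?_ (continuous_apply n)
    exact (continuous_of_discreteTopology (f := G.φ n)).comp (continuous_apply (n+1))
  exact isCompact_iff_compactSpace.mp hcl.isCompact

lemma GraphCovering.continuous_coord (G : GraphCovering) (n : ℕ) :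
    Continuous (fun x : G.limit => x.1 n) :=
  (continuous_apply n).comp continuous_subtype_val

/-- continuity into a discrete space gives uniform local constancy on a compact metric space -/
lemma lemA {Y Z : Type*} [MetricSpace Y] [CompactSpace Y] [TopologicalSpace Z]
    [DiscreteTopology Z] (p : Y → Z) (hp : Continuous p) :
    ∃ ε > (0:ℝ), ∀ a b : Y, dist a b < ε → p a = p b := by
  set S : Set (Y × Y) := {q | p q.1 ≠ p q.2} with hS
  have hSc : IsClosed S := by
    rw [← isOpen_compl_iff]
    have : Sᶜ = (fun q : Y × Y => (p q.1, p q.2)) ⁻¹' {z : Z × Z | z.1 = z.2} := by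
      ext q; simp [hS]
    rw [this]
    exact (((hp.comp continuous_fst).prodMk (hp.comp continuous_snd))).isOpen_preimage _
      (isOpen_discrete _)
  have hScomp : IsCompact S := hSc.isCompact
  rcases S.eq_empty_or_nonempty with he | hne
  · refine ⟨1, one_pos, fun a b _ => ?_⟩
    by_contra hab
    have : (a, b) ∈ S := hab
    rw [he] at this
    exact this
  · obtain ⟨q0, hq0, hmin⟩ := hScomp.exists_isMinOn hne
      ((continuous_dist.comp (continuous_fst.prodMk continuous_snd)).continuousOn :
        ContinuousOn (fun q : Y × Y => dist q.1 q.2) S)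
    refine ⟨dist q0.1 q0.2, ?_, fun a b hab => ?_⟩
    · exact dist_pos.mpr (fun h => hq0 (by rw [h]))
    · by_contra hpab
      have h3 : dist q0.1 q0.2 ≤ dist a b := hmin (show (a,b) ∈ S from hpab)
      linarith

/-- a decreasing family of closed relations whose intersection is the diagonal eventually
lies within `ε` of the diagonal, on a compact metric space -/
lemma lemB {Y : Type*} [MetricSpace Y] [CompactSpace Y] (A : ℕ → Set (Y × Y))
    (hA : ∀ N, IsClosed (A N)) (hmono : ∀ N, A (N+1) ⊆ A N)
    (hinter : ∀ q : Y × Y, (∀ N, q ∈ A N) → q.1 = q.2) {ε : ℝ} (hε : 0 < ε) :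
    ∃ N, ∀ q ∈ A N, dist q.1 q.2 < ε := by
  by_contra h
  push_neg at h
  have hmono' : ∀ ⦃N M⦄, N ≤ M → A M ⊆ A N := by
    intro N M hNM
    induction hNM with
    | refl => exact fun _ h => h
    | step _ ih => intro q hq; exact ih (hmono _ hq)
  set C : ℕ → Set (Y × Y) := fun N => A N ∩ {q | ε ≤ dist q.1 q.2} with hC
  have hCc : ∀ N, IsClosed (C N) := fun N =>
    (hA N).inter (isClosed_le continuous_const
      (continuous_dist.comp (continuous_fst.prodMk continuous_snd)))
  have hCn : ∀ N, (C N).Nonempty := by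
    intro N
    obtain ⟨q, hq1, hq2⟩ := h N
    exact ⟨q, hq1, hq2⟩
  have hCd : Directed (· ⊇ ·) C := by
    intro N M
    refine ⟨max N M, ?_, ?_⟩
    · exact fun q hq => ⟨hmono' (le_max_left N M) hq.1, hq.2⟩
    · exact fun q hq => ⟨hmono' (le_max_right N M) hq.1, hq.2⟩
  obtain ⟨q, hq⟩ := IsCompact.nonempty_iInter_of_directed_nonempty_isCompact_isClosed
    C hCd hCn (fun N => (hCc N).isCompact) hCc
  simp only [Set.mem_iInter] at hq
  have h1 : q.1 = q.2 := hinter q (fun N => (hq N).1)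
  have h2 : ε ≤ dist q.1 q.2 := (hq 0).2
  rw [h1, dist_self] at h2
  linarith

/-- an edge-chain of length `l` gives a walk list -/
lemma exists_walk_list {V : Type*} (E : V → V → Prop) (g : ℕ → V) (l : ℕ)
    (h : ∀ i < l, E (g i) (g (i+1))) :
    ∃ w : List V, w ≠ [] ∧ w.Chain' E ∧ w.head? = some (g 0) ∧ w.getLast? = some (g l) := by
  induction l with
  | zero => exact ⟨[g 0], by simp [List.Chain']⟩
  | succ l ih =>
    obtain ⟨w, hne, hch, hhd, hlast⟩ := ih (fun i hi => h i (by omega))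
    refine ⟨w ++ [g (l+1)], by simp, ?_, ?_, ?_⟩
    · refine List.IsChain.append hch (List.isChain_singleton _) ?_
      intro x hx y hy
      rw [hlast] at hx
      simp at hx hy
      rw [← hx, ← hy]
      exact h l (by omega)
    · rw [List.head?_append_of_ne_nil _ hne]
      exact hhd
    · exact List.getLast?_concat

theorem chain_transitive_iff_irreducible (G : GraphCovering)
    (m : MetricSpace G.limit)
    (hm : m.toUniformSpace.toTopologicalSpace =
      (inferInstance : TopologicalSpace G.limit))
    (f : G.limit → G.limit) (hf : ∀ x, G.rel x (f x)) :
    (∀ ε > (0 : ℝ), ∀ x y : G.limit, ∃ (l : ℕ) (c : ℕ → G.limit),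
        c 0 = x ∧ c l = y ∧ ∀ i < l, m.dist (f (c i)) (c (i + 1)) < ε) ↔
      (∀ n ≥ 1, GraphIrreducible (G.E n)) := by
  have hcs : @CompactSpace G.limit m.toUniformSpace.toTopologicalSpace := by
    rw [hm]; exact G.compactSpace_limit
  constructor
  · -- chain transitive → irreducible
    intro hct n _ u v
    obtain ⟨x, hx⟩ := G.exists_lift n u
    obtain ⟨y, hy⟩ := G.exists_lift n v
    have hpc : @Continuous _ _ m.toUniformSpace.toTopologicalSpace _
        (fun x : G.limit => x.1 n) := by
      rw [hm]; exact G.continuous_coord n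
    obtain ⟨ε, hε, hcoord⟩ := @lemA G.limit (G.V n) m hcs _ _ _ hpc
    obtain ⟨l, c, hc0, hcl, hstep⟩ := hct ε hε x y
    have hedge : ∀ i < l, G.E n ((c i).1 n) ((c (i+1)).1 n) := by
      intro i hi
      have h1 := hf (c i) n
      have h2 : (f (c i)).1 n = (c (i+1)).1 n := hcoord _ _ (hstep i hi)
      rwa [h2] at h1
    obtain ⟨w, hne, hch, hhd, hlast⟩ := exists_walk_list (G.E n)
      (fun i => (c i).1 n) l hedge
    refine ⟨w, hne, hch, ?_, ?_⟩
    · rw [hhd, hc0, hx]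
    · rw [hlast, hcl, hy]
  · -- irreducible → chain transitive
    intro hirr ε hε x y
    -- get N such that agreement up to N forces distance < ε
    set A : ℕ → Set (G.limit × G.limit) :=
      fun N => {q | ∀ k ≤ N, q.1.1 k = q.2.1 k} with hA
    have hAclosed : ∀ N, @IsClosed _
        (@instTopologicalSpaceProd _ _ m.toUniformSpace.toTopologicalSpace
          m.toUniformSpace.toTopologicalSpace) (A N) := by
      intro N
      rw [hm]
      have he : A N = ⋂ (k : ℕ) (_ : k ≤ N),
          {q : G.limit × G.limit | q.1.1 k = q.2.1 k} := by
        ext q; simp [hA, Set.mem_iInter]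
      rw [he]
      refine isClosed_iInter fun k => isClosed_iInter fun _ => isClosed_eq ?_ ?_
      · exact (G.continuous_coord k).comp continuous_fst
      · exact (G.continuous_coord k).comp continuous_snd
    have hAmono : ∀ N, A (N+1) ⊆ A N := fun N q hq k hk => hq k (by omega)
    have hAinter : ∀ q : G.limit × G.limit, (∀ N, q ∈ A N) → q.1 = q.2 := by
      intro q hq
      exact Subtype.ext (funext fun k => hq k k le_rfl)
    obtain ⟨N, hN⟩ := @lemB G.limit m hcs A hAclosed hAmono hAinter ε hε
    have key : ∀ a b : G.limit, (∀ k ≤ N, a.1 k = b.1 k) → m.dist a b < ε :=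
      fun a b h => hN (a, b) h
    -- use irreducibility at level N+1
    obtain ⟨w, wne, wch, whd, wlast⟩ := hirr (N+1) (by omega) ((f x).1 (N+1)) (y.1 (N+1))
    obtain ⟨a, t, rfl⟩ : ∃ a t, w = a :: t := by
      cases w with
      | nil => exact absurd rfl wne
      | cons a t => exact ⟨a, t, rfl⟩
    set L := (a :: t).length with hLdef
    have hL : 1 ≤ L := by simp [hLdef]
    set A' : ℕ → G.V (N+1) := fun i => (a :: t).getD i (x.1 (N+1)) with hA'
    have hA0 : A' 0 = (f x).1 (N+1) := by
      simp only [List.head?] at whd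
      simpa [hA', List.getD] using whd
    have hAlast : A' (L-1) = y.1 (N+1) := by
      have := List.getLast?_eq_getLast (l := a :: t) (by simp)
      rw [this] at wlast
      have hgl : (a :: t).getLast (by simp)
          = (a :: t)[L - 1]'(by simp [hLdef]) := List.getLast_eq_getElem _
      simp only [hA']
      rw [List.getD_eq_getElem _ _ (by rw [← hLdef]; omega)]
      rw [← hgl]
      exact (Option.some_injective _ wlast)
    have hedges : ∀ i, i + 1 < L → G.E (N+1) (A' i) (A' (i+1)) := by
      intro i hi
      have := List.isChain_iff_getElem.mp wch i (by simpa [hLdef] using hi)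
      simp only [hA']
      rw [List.getD_eq_getElem _ _ (by omega : i < (a :: t).length),
        List.getD_eq_getElem _ _ (by omega : i + 1 < (a :: t).length)]
      exact this
    classical
    set c : ℕ → G.limit := fun i =>
      if i = 0 then x else if i = L then y
      else (G.exists_lift (N+1) (A' (i-1))).choose with hc
    have hcoordM : ∀ j, 1 ≤ j → j ≤ L → (c j).1 (N+1) = A' (j-1) := by
      intro j hj1 hjL
      by_cases hjL' : j = L
      · have hcL : c L = y := by
          simp only [hc]
          rw [if_neg (by omega : ¬ L = 0)]
          simp
        rw [hjL', hcL]
        exact hAlast.symm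
      · simp only [hc, if_neg (by omega : ¬ j = 0), if_neg hjL']
        exact (G.exists_lift (N+1) (A' (j-1))).choose_spec
    refine ⟨L, c, by simp [hc], ?_, ?_⟩
    · show c L = y
      simp only [hc]
      rw [if_neg (by omega : ¬ L = 0)]
      simp
    · intro i hi
      apply key
      rcases Nat.eq_zero_or_pos i with hi0 | hi1
      · subst hi0
        have hc0 : c 0 = x := by simp [hc]
        have hM : (f (c 0)).1 (N+1) = (c 1).1 (N+1) := by
          rw [hc0, hcoordM 1 le_rfl (by omega), hA0]
        intro k hk
        exact G.agree_down (f (c 0)) (c 1) (N+1) hM k (by omega)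
      · have e1 : G.E (N+1) (A' (i-1)) ((f (c i)).1 (N+1)) := by
          have h1 := hf (c i) (N+1)
          rwa [hcoordM i hi1 (by omega)] at h1
        have e2 : G.E (N+1) (A' (i-1)) (A' i) := by
          have := hedges (i-1) (by omega)
          rwa [show i - 1 + 1 = i by omega] at this
        have keyeq : G.φ N ((f (c i)).1 (N+1)) = G.φ N (A' i) :=
          G.plusdir N (A' (i-1)) _ _ e1 e2
        have hNeq : (f (c i)).1 N = (c (i+1)).1 N := by
          have ha := (f (c i)).2 N
          have hb := (c (i+1)).2 N
          have hcM : (c (i+1)).1 (N+1) = A' i := by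
            have := hcoordM (i+1) (by omega) (by omega)
            rwa [show i + 1 - 1 = i by omega] at this
          rw [← ha, ← hb, hcM]
          exact keyeq
        intro k hk
        exact G.agree_down (f (c i)) (c (i+1)) N hNeq k hk
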